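/- Let b be a slowly varying function, (α_i)_{i∈ℕ} positive reals with ∑_i α_i < ∞, and 1 < p < ∞. Then ∑_{i∈ℕ} α_i^p γ_b(α_i) ≲ (∑_{i∈ℕ} α_i)^p γ_b(∑_{i∈ℕ} α_i), with constant depending only on p and b. -/

import Mathlib

open MeasureTheory Set ENNReal Filter Topology

noncomputable section

/-- A measurable function `b : [1,∞) → (0,∞)` is slowly varying if for every `ε > 0`,
`t ^ ε * b t` is equivalent (up to multiplicative constants) to a nondecreasing function
and `t ^ (-ε) * b t` is equivalent to a nonincreasing function on `[1,∞)`. -/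
def SlowlyVarying (b : ℝ → ℝ) : Prop :=
  (∀ t : ℝ, 1 ≤ t → 0 < b t) ∧
  ∀ ε : ℝ, 0 < ε →
    ((∃ g : ℝ → ℝ, MonotoneOn g (Set.Ici 1) ∧ ∃ c > (0:ℝ), ∃ C > (0:ℝ),
        ∀ t : ℝ, 1 ≤ t → c * g t ≤ t ^ ε * b t ∧ t ^ ε * b t ≤ C * g t) ∧
     (∃ g : ℝ → ℝ, AntitoneOn g (Set.Ici 1) ∧ ∃ c > (0:ℝ), ∃ C > (0:ℝ),
        ∀ t : ℝ, 1 ≤ t → c * g t ≤ t ^ (-ε) * b t ∧ t ^ (-ε) * b t ≤ C * g t))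

/-- `γ_b(t) = b (max {t, t⁻¹})` for `t > 0`. -/
def gammaB (b : ℝ → ℝ) (t : ℝ) : ℝ := b (max t t⁻¹)

set_option maxHeartbeats 1000000 in
/-- For a slowly varying `b`, `1 < p < ∞` and positive summable `(α_i)`,
`∑_i α_i^p γ_b(α_i) ≲ (∑_i α_i)^p γ_b(∑_i α_i)` with constant depending only on `p` and `b`. -/
theorem gammaB_tsum_le (b : ℝ → ℝ) (hb : SlowlyVarying b) (p : ℝ) (hp : 1 < p) :
    ∃ C > (0:ℝ), ∀ α : ℕ → ℝ, (∀ i, 0 < α i) → Summable α →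
      ∑' i, ENNReal.ofReal (α i ^ p * gammaB b (α i)) ≤
        ENNReal.ofReal C *
          ENNReal.ofReal ((∑' i, α i) ^ p * gammaB b (∑' i, α i)) := by
  obtain ⟨hbpos, hsv⟩ := hb
  obtain ⟨⟨g₁, hg₁, c₁, hc₁, C₁, hC₁, h₁⟩, g₂, hg₂, c₂, hc₂, C₂, hC₂, h₂⟩ :=
    hsv (p - 1) (by linarith)
  set ε := p - 1 with hεdef
  have hε : (0:ℝ) < ε := by simp [hεdef]; linarith
  set K := max (C₁ / c₁) (C₂ / c₂) with hKdef
  have hKpos : 0 < K := lt_max_of_lt_left (div_pos hC₁ hc₁)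
  have hmax1 : ∀ t : ℝ, 0 < t → 1 ≤ max t t⁻¹ := by
    intro t ht
    rcases le_total 1 t with h | h
    · exact le_max_of_le_left h
    · exact le_max_of_le_right (one_le_inv_iff₀.mpr ⟨ht, h⟩)
  have hγpos : ∀ t : ℝ, 0 < t → 0 < gammaB b t := fun t ht => hbpos _ (hmax1 t ht)
  -- key comparison: γ_b(t) ≤ K (s/t)^ε γ_b(s) for 0 < t ≤ s
  have key : ∀ t s : ℝ, 0 < t → t ≤ s → gammaB b t ≤ K * (s / t) ^ ε * gammaB b s := by
    intro t s ht hts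
    have hs : 0 < s := ht.trans_le hts
    set u := max t t⁻¹ with hudef
    set v := max s s⁻¹ with hvdef
    have hu : (1:ℝ) ≤ u := hmax1 t ht
    have hv : (1:ℝ) ≤ v := hmax1 s hs
    have hr1 : (1:ℝ) ≤ s / t := (one_le_div ht).mpr hts
    have hr0 : (0:ℝ) < s / t := by positivity
    have hbu : 0 < b u := hbpos u hu
    have hbv : 0 < b v := hbpos v hv
    have huε : 0 < u ^ ε := Real.rpow_pos_of_pos (by linarith) ε
    have hvε : 0 < v ^ ε := Real.rpow_pos_of_pos (by linarith) ε
    have hqε : 0 < (s / t) ^ ε := Real.rpow_pos_of_pos hr0 ε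
    have huv : u ≤ (s / t) * v := by
      apply max_le
      · rcases le_total t 1 with h | h
        · nlinarith
        · have hvs : s ≤ v := le_max_left _ _
          nlinarith
      · have hvs : s⁻¹ ≤ v := le_max_right _ _
        have : t⁻¹ = (s / t) * s⁻¹ := by field_simp
        rw [this]
        nlinarith
    have hvu : v ≤ (s / t) * u := by
      apply max_le
      · have hut : t ≤ u := le_max_left _ _
        have hst : (s / t) * t = s := by field_simp
        nlinarith [mul_le_mul_of_nonneg_left hut hr0.le]
      · rcases le_total 1 s with h | h
        · have : s⁻¹ ≤ 1 := inv_le_one_of_one_le₀ h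
          nlinarith
        · have h1 : s⁻¹ ≤ t⁻¹ := by
            apply inv_anti₀ ht hts
          have h2 : t⁻¹ ≤ u := le_max_right _ _
          nlinarith
    have main : b u ≤ K * (s / t) ^ ε * b v := by
      rcases le_total u v with huv' | hvu'
      · -- use the nondecreasing comparison g₁
        have e1 : u ^ ε * b u ≤ C₁ * g₁ u := (h₁ u hu).2
        have e2 : g₁ u ≤ g₁ v := hg₁ hu hv huv'
        have e3 : c₁ * g₁ v ≤ v ^ ε * b v := (h₁ v hv).1
        have hvle : v ^ ε ≤ (s / t) ^ ε * u ^ ε := by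
          calc v ^ ε ≤ ((s / t) * u) ^ ε :=
                Real.rpow_le_rpow (by linarith) hvu hε.le
            _ = (s / t) ^ ε * u ^ ε := Real.mul_rpow hr0.le (by linarith)
        have step : u ^ ε * b u ≤ (C₁ / c₁) * (v ^ ε * b v) := by
          calc u ^ ε * b u ≤ C₁ * g₁ u := e1
            _ ≤ C₁ * g₁ v := mul_le_mul_of_nonneg_left e2 hC₁.le
            _ = (C₁ / c₁) * (c₁ * g₁ v) := by field_simp
            _ ≤ (C₁ / c₁) * (v ^ ε * b v) := by
                exact mul_le_mul_of_nonneg_left e3 (by positivity)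
        have step2 : u ^ ε * b u ≤ u ^ ε * ((C₁ / c₁) * (s / t) ^ ε * b v) := by
          have : (C₁ / c₁) * (v ^ ε * b v) ≤ (C₁ / c₁) * ((s / t) ^ ε * u ^ ε * b v) := by
            apply mul_le_mul_of_nonneg_left _ (by positivity)
            exact mul_le_mul_of_nonneg_right hvle hbv.le
          calc u ^ ε * b u ≤ (C₁ / c₁) * (v ^ ε * b v) := step
            _ ≤ (C₁ / c₁) * ((s / t) ^ ε * u ^ ε * b v) := this
            _ = u ^ ε * ((C₁ / c₁) * (s / t) ^ ε * b v) := by ring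
        have hfin : b u ≤ (C₁ / c₁) * (s / t) ^ ε * b v :=
          le_of_mul_le_mul_left step2 huε
        have hKge : C₁ / c₁ ≤ K := le_max_left _ _
        refine hfin.trans ?_
        exact mul_le_mul_of_nonneg_right
          (mul_le_mul_of_nonneg_right hKge hqε.le) hbv.le
      · -- use the nonincreasing comparison g₂
        have e1 : u ^ (-ε) * b u ≤ C₂ * g₂ u := (h₂ u hu).2
        have e2 : g₂ u ≤ g₂ v := hg₂ hv hu hvu'
        have e3 : c₂ * g₂ v ≤ v ^ (-ε) * b v := (h₂ v hv).1
        have hneg_u : u ^ (-ε) = (u ^ ε)⁻¹ := Real.rpow_neg (by linarith) ε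
        have hneg_v : v ^ (-ε) = (v ^ ε)⁻¹ := Real.rpow_neg (by linarith) ε
        have hule : u ^ ε ≤ (s / t) ^ ε * v ^ ε := by
          calc u ^ ε ≤ ((s / t) * v) ^ ε :=
                Real.rpow_le_rpow (by linarith) huv hε.le
            _ = (s / t) ^ ε * v ^ ε := Real.mul_rpow hr0.le (by linarith)
        have step : (u ^ ε)⁻¹ * b u ≤ (C₂ / c₂) * ((v ^ ε)⁻¹ * b v) := by
          calc (u ^ ε)⁻¹ * b u = u ^ (-ε) * b u := by rw [hneg_u]
            _ ≤ C₂ * g₂ u := e1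
            _ ≤ C₂ * g₂ v := mul_le_mul_of_nonneg_left e2 hC₂.le
            _ = (C₂ / c₂) * (c₂ * g₂ v) := by field_simp
            _ ≤ (C₂ / c₂) * (v ^ (-ε) * b v) := by
                exact mul_le_mul_of_nonneg_left e3 (by positivity)
            _ = (C₂ / c₂) * ((v ^ ε)⁻¹ * b v) := by rw [hneg_v]
        have step2 : b u ≤ u ^ ε * ((C₂ / c₂) * ((v ^ ε)⁻¹ * b v)) :=
          (inv_mul_le_iff₀ huε).mp step
        have step3 : b u ≤ ((s / t) ^ ε * v ^ ε) * ((C₂ / c₂) * ((v ^ ε)⁻¹ * b v)) := by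
          refine step2.trans ?_
          apply mul_le_mul_of_nonneg_right hule (by positivity)
        have heq : ((s / t) ^ ε * v ^ ε) * ((C₂ / c₂) * ((v ^ ε)⁻¹ * b v))
            = (C₂ / c₂) * (s / t) ^ ε * b v := by
          field_simp
        have hKge : C₂ / c₂ ≤ K := le_max_right _ _
        rw [heq] at step3
        refine step3.trans ?_
        exact mul_le_mul_of_nonneg_right
          (mul_le_mul_of_nonneg_right hKge hqε.le) hbv.le
    exact main
  refine ⟨K, hKpos, fun α hα hsum => ?_⟩
  set S := ∑' i, α i with hSdef
  have hSpos : 0 < S := Summable.tsum_pos hsum (fun i => (hα i).le) 0 (hα 0)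
  have hγS : 0 < gammaB b S := hγpos S hSpos
  have hle : ∀ i, α i ≤ S := fun i => Summable.le_tsum hsum i (fun j _ => (hα j).le)
  have term : ∀ i, α i ^ p * gammaB b (α i) ≤ (K * (gammaB b S * S ^ ε)) * α i := by
    intro i
    have hx : 0 < α i := hα i
    have h1 := key (α i) S hx (hle i)
    have h2 : α i ^ p * gammaB b (α i) ≤ α i ^ p * (K * (S / α i) ^ ε * gammaB b S) := by
      apply mul_le_mul_of_nonneg_left h1 (by positivity)
    have h3 : α i ^ p * (K * (S / α i) ^ ε * gammaB b S) = (K * (gammaB b S * S ^ ε)) * α i := by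
      rw [Real.div_rpow hSpos.le hx.le]
      have hxε : (0:ℝ) < α i ^ ε := Real.rpow_pos_of_pos hx ε
      have hpε : α i ^ p = α i ^ ε * α i := by
        rw [show p = ε + 1 by simp [hεdef], Real.rpow_add_one hx.ne']
      rw [hpε]
      field_simp
    linarith
  have hcoef : (0:ℝ) ≤ K * (gammaB b S * S ^ ε) := by positivity
  calc ∑' i, ENNReal.ofReal (α i ^ p * gammaB b (α i))
      ≤ ∑' i, ENNReal.ofReal ((K * (gammaB b S * S ^ ε)) * α i) :=
        ENNReal.tsum_le_tsum fun i => ENNReal.ofReal_le_ofReal (term i)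
    _ = ∑' i, ENNReal.ofReal (K * (gammaB b S * S ^ ε)) * ENNReal.ofReal (α i) := by
        simp_rw [ENNReal.ofReal_mul hcoef]
    _ = ENNReal.ofReal (K * (gammaB b S * S ^ ε)) * ENNReal.ofReal S := by
        rw [ENNReal.tsum_mul_left,
          ← ENNReal.ofReal_tsum_of_nonneg (fun i => (hα i).le) hsum]
    _ = ENNReal.ofReal K * ENNReal.ofReal (S ^ p * gammaB b S) := by
        rw [← ENNReal.ofReal_mul hcoef]
        have : K * (gammaB b S * S ^ ε) * S = K * (S ^ p * gammaB b S) := by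
          rw [show p = ε + 1 by simp [hεdef], Real.rpow_add_one hSpos.ne']
          ring
        rw [this, ENNReal.ofReal_mul hKpos.le]
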